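/- A projective left R-module M is a J(R)-supplemented module if and only if M is a supplemented module. -/

import Mathlib

open Submodule Function LinearMap

universe u v w x y

section Defs

variable (R : Type u) [Ring R]

/-- `I` (a left ideal) is a two-sided ideal. -/
def IsTwoSidedI (I : Ideal R) : Prop := ∀ a b : R, a ∈ I → a * b ∈ I

variable {M : Type v} [AddCommGroup M] [Module R M]

/-- `N` is PSD in the submodule `T` of `M` (taking `T = ⊤` gives "PSD in `M`"):
whenever `N + X = T`, there is a projective direct summand `S` of `T` with `S ≤ N`
and `T = S ⊕ X`. -/
def PSDIn (T N : Submodule R M) : Prop :=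
  ∀ X : Submodule R M, X ≤ T → N ⊔ X = T →
    ∃ S : Submodule R M, Module.Projective R S ∧ S ≤ N ∧ S ⊔ X = T ∧ S ⊓ X = ⊥

/-- `M` is PSD for the ideal `I`: every submodule of `IM` is PSD in `M`. -/
def PSDFor (I : Ideal R) (M : Type v) [AddCommGroup M] [Module R M] : Prop :=
  ∀ N : Submodule R M, N ≤ I • (⊤ : Submodule R M) → PSDIn R ⊤ N

/-- `R` is a left PSD ring for `I`: every finitely generated free left `R`-module is PSD for `I`. -/
def PSDRing (I : Ideal R) : Prop :=
  ∀ (F : Type u) [AddCommGroup F] [Module R F] [Module.Free R F] [Module.Finite R F],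
    PSDFor R I F

/-- `f : P → M` is a projective `I`-cover. -/
def IsProjICover (I : Ideal R) {P : Type w} [AddCommGroup P] [Module R P]
    (f : P →ₗ[R] M) : Prop :=
  Surjective f ∧ Module.Projective R P ∧
    LinearMap.ker f ≤ I • (⊤ : Submodule R P) ∧ PSDIn R ⊤ (LinearMap.ker f)

/-- A projective `I`-cover of `M`. -/
structure ProjICover (I : Ideal R) (M : Type v) [AddCommGroup M] [Module R M] where
  P : Type w
  [addP : AddCommGroup P]
  [modP : Module R P]
  f : P →ₗ[R] M
  cover : IsProjICover R I f

/-- `R` is `I`-semiregular. -/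
def ISemiregular (I : Ideal R) : Prop :=
  ∀ a : R, ∃ P Q : Submodule R R, IsCompl P Q ∧ Module.Projective R P ∧
    P ≤ Submodule.span R {a} ∧ Submodule.span R {a} ⊓ Q ≤ I

/-- `R` is `I`-semiperfect. -/
def ISemiperfect (I : Ideal R) : Prop :=
  ∀ K : Submodule R R, ∃ A B : Submodule R R, IsCompl A B ∧ Module.Projective R A ∧
    A ≤ K ∧ K ⊓ B ≤ I

end Defs




section Defs2

variable (R : Type u) [Ring R]
variable {M : Type v} [AddCommGroup M] [Module R M]

/-- A submodule `S` is small in the submodule `T` (take `T = ⊤` for "small in `M`"). -/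
def SmallIn (T S : Submodule R M) : Prop :=
  ∀ X : Submodule R M, X ≤ T → S ⊔ X = T → X = T

/-- `K` is DM in the submodule `T` of `M`: whenever `K + X = T` there is a direct
summand `S` of `T` with `S ≤ K` and `S + X = T`. -/
def DMIn (T K : Submodule R M) : Prop :=
  ∀ X : Submodule R M, X ≤ T → K ⊔ X = T →
    ∃ S : Submodule R M, S ≤ K ∧ (∃ S' : Submodule R M, S ⊔ S' = T ∧ S ⊓ S' = ⊥) ∧ S ⊔ X = T

/-- `M` is DM for `I`: every submodule of `IM` is DM in `M`. -/
def DMFor (I : Ideal R) (M : Type v) [AddCommGroup M] [Module R M] : Prop :=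
  ∀ K : Submodule R M, K ≤ I • (⊤ : Submodule R M) → DMIn R ⊤ K

/-- `R` is a left DM ring for `I`. -/
def DMRing (I : Ideal R) : Prop :=
  ∀ (F : Type u) [AddCommGroup F] [Module R F] [Module.Free R F] [Module.Finite R F],
    DMFor R I F

/-- `M` is an `I`-supplemented module. -/
def ISupplemented (I : Ideal R) (M : Type v) [AddCommGroup M] [Module R M] : Prop :=
  ∀ X : Submodule R M, ∃ Y : Submodule R M, Module.Projective R Y ∧ X ⊔ Y = ⊤ ∧
    X ⊓ Y ≤ I • Y ∧ DMIn R Y (X ⊓ Y)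

/-- `M` is a finitely `I`-supplemented module. -/
def FinISupplemented (I : Ideal R) (M : Type v) [AddCommGroup M] [Module R M] : Prop :=
  ∀ X : Submodule R M, X.FG → ∃ Y : Submodule R M, Module.Projective R Y ∧ X ⊔ Y = ⊤ ∧
    X ⊓ Y ≤ I • Y ∧ DMIn R Y (X ⊓ Y)

/-- `M` is a supplemented module. -/
def Supplemented (M : Type v) [AddCommGroup M] [Module R M] : Prop :=
  ∀ X : Submodule R M, ∃ Y : Submodule R M, X ⊔ Y = ⊤ ∧ SmallIn R Y (X ⊓ Y)

/-- `M` is an `I`-semiperfect module. -/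
def ISemiperfectMod (I : Ideal R) (M : Type v) [AddCommGroup M] [Module R M] : Prop :=
  ∀ K : Submodule R M, ∃ A B : Submodule R M, IsCompl A B ∧ Module.Projective R A ∧
    A ≤ K ∧ K ⊓ B ≤ I • (⊤ : Submodule R M)

/-- The radical of `M`: the intersection of all maximal submodules. -/
def RadM (M : Type v) [AddCommGroup M] [Module R M] : Submodule R M :=
  sInf {N : Submodule R M | IsCoatom N}

/-- The socle of `M`: the sum of all simple submodules. -/
def SocM (M : Type v) [AddCommGroup M] [Module R M] : Submodule R M :=
  sSup {N : Submodule R M | IsSimpleModule R N}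

/-- `P` is locally projective (lifting version). -/
def LocallyProjective (P : Type w) [AddCommGroup P] [Module R P] : Prop :=
  ∀ (A : Type x) (B : Type y) [AddCommGroup A] [Module R A] [AddCommGroup B] [Module R B]
    (g : A →ₗ[R] B) (f : P →ₗ[R] B), Surjective g →
      ∀ P₀ : Submodule R P, P₀.FG → ∃ h : P →ₗ[R] A, ∀ p ∈ P₀, f p = g (h p)

/-- `P` is locally projective (splitting version). -/
def LocallyProjectiveB (P : Type w) [AddCommGroup P] [Module R P] : Prop :=
  ∀ (N : Type x) [AddCommGroup N] [Module R N] (g : N →ₗ[R] P), Surjective g →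
    ∀ P₀ : Submodule R P, P₀.FG → ∃ h : P →ₗ[R] N, ∀ p ∈ P₀, g (h p) = p


/-- A locally projective `I`-cover of `M`. -/
structure LocProjICover (I : Ideal R) (M : Type v) [AddCommGroup M] [Module R M] where
  P : Type w
  [addP : AddCommGroup P]
  [modP : Module R P]
  f : P →ₗ[R] M
  surj : Surjective f
  locProj : LocallyProjective.{u, w, x, y} R P
  ker_le : LinearMap.ker f ≤ I • (⊤ : Submodule R P)
  psd : PSDIn R ⊤ (LinearMap.ker f)

/-- A locally projective cover of `M`. -/
structure LocProjCover (M : Type v) [AddCommGroup M] [Module R M] where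
  P : Type w
  [addP : AddCommGroup P]
  [modP : Module R P]
  f : P →ₗ[R] M
  surj : Surjective f
  locProj : LocallyProjective.{u, w, x, y} R P
  ker_small : SmallIn R ⊤ (LinearMap.ker f)

/-- A projective cover of `M`. -/
structure ProjCover (M : Type v) [AddCommGroup M] [Module R M] where
  P : Type w
  [addP : AddCommGroup P]
  [modP : Module R P]
  f : P →ₗ[R] M
  surj : Surjective f
  proj : Module.Projective R P
  ker_small : SmallIn R ⊤ (LinearMap.ker f)

/-- `M` is self-projective (quasi-projective). -/
def SelfProjective (M : Type v) [AddCommGroup M] [Module R M] : Prop :=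
  ∀ (K : Submodule R M) (f : M →ₗ[R] M ⧸ K), ∃ h : M →ₗ[R] M, K.mkQ ∘ₗ h = f

/-- A projectivity class of `R`-modules (in a fixed universe). -/
def ProjectivityClass
    (Pc : ∀ (N : Type w) [AddCommGroup N] [Module R N], Prop) : Prop :=
  (∀ (N : Type w) [AddCommGroup N] [Module R N], SelfProjective R N → Pc N) ∧
  (∀ (N P : Type w) [AddCommGroup N] [Module R N] [AddCommGroup P] [Module R P]
      (f : P →ₗ[R] N), Surjective f → Module.Projective R P → Pc (P × N) →
        Module.Projective R N)

/-- `Pc` is closed under direct summands. -/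
def ClosedUnderSummands
    (Pc : ∀ (N : Type w) [AddCommGroup N] [Module R N], Prop) : Prop :=
  ∀ (N P : Type w) [AddCommGroup N] [Module R N] [AddCommGroup P] [Module R P],
    Pc P → ∀ (i : N →ₗ[R] P) (p : P →ₗ[R] N), p ∘ₗ i = LinearMap.id → Pc N

/-- A `Pc`-projective `I`-cover of `M`. -/
structure PProjICover (Pc : ∀ (N : Type w) [AddCommGroup N] [Module R N], Prop)
    (I : Ideal R) (M : Type v) [AddCommGroup M] [Module R M] where
  Q : Type w
  [addQ : AddCommGroup Q]
  [modQ : Module R Q]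
  g : Q →ₗ[R] M
  surj : Surjective g
  memP : Pc Q
  ker_le : LinearMap.ker g ≤ I • (⊤ : Submodule R Q)
  psd : PSDIn R ⊤ (LinearMap.ker g)

end Defs2

section Aux14

variable {R : Type u} [Ring R]

/-- Left inverse for `1 - a` when `a` is in the Jacobson radical. -/
lemma jacAux_leftInv {a : R} (ha : a ∈ Ideal.jacobson (⊥ : Ideal R)) :
    ∃ z : R, z * (1 - a) = 1 := by
  obtain ⟨z, hz⟩ := Ideal.mem_jacobson_iff.mp ha (-1)
  rw [Ideal.mem_bot] at hz
  refine ⟨z, ?_⟩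
  have h1 : z * (1 - a) - 1 = z * -1 * a + z - 1 := by noncomm_ring
  have h2 : z * (1 - a) - 1 = 0 := by rw [h1, hz]
  exact sub_eq_zero.mp h2

lemma jacAux_isUnit {a : R} (ha : a ∈ Ideal.jacobson (⊥ : Ideal R)) :
    IsUnit (1 - a) := by
  obtain ⟨z, hz⟩ := jacAux_leftInv ha
  have hza : -(z * a) ∈ Ideal.jacobson (⊥ : Ideal R) :=
    neg_mem (Ideal.mul_mem_left _ z ha)
  obtain ⟨w, hw⟩ := jacAux_leftInv hza
  have hz' : (1 : R) - -(z * a) = z := by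
    have h1 : z - z * a = 1 := by rw [← hz]; noncomm_ring
    have h2 : z = 1 + z * a := by
      rw [← h1]; noncomm_ring
    rw [sub_neg_eq_add, ← h2]
  rw [hz'] at hw
  have hw' : w = 1 - a := by
    calc w = w * (z * (1 - a)) := by rw [hz, mul_one]
    _ = (w * z) * (1 - a) := by rw [mul_assoc]
    _ = 1 - a := by rw [hw, one_mul]
  exact ⟨⟨1 - a, z, by rw [← hw', hw], hz⟩, rfl⟩

lemma jacAux_mul_right {a : R} (ha : a ∈ Ideal.jacobson (⊥ : Ideal R)) (r : R) :
    a * r ∈ Ideal.jacobson (⊥ : Ideal R) :=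
  Ideal.mul_mem_right _ _ ha

/-- The key linear-algebraic fact over the Jacobson radical: a finite family of
ring elements satisfying `x i = ∑ j, x j * c j i` with all `c j i` in the radical
must vanish. -/
lemma jacAux_system {ι : Type*} [DecidableEq ι] (t : Finset ι) :
    ∀ c : ι → ι → R, (∀ j i, c j i ∈ Ideal.jacobson (⊥ : Ideal R)) →
    ∀ x : ι → R, (∀ i ∈ t, x i = ∑ j ∈ t, x j * c j i) → ∀ i ∈ t, x i = 0 := by
  classical
  induction t using Finset.induction_on with
  | empty => intro c hc x hx i hi; exact absurd hi (Finset.notMem_empty i)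
  | @insert a s ha ih =>
    intro c hc x hx
    have hxa := hx a (Finset.mem_insert_self a s)
    rw [Finset.sum_insert ha] at hxa
    -- x a * (1 - c a a) = ∑ j in s, x j * c j a
    have hXa : x a * (1 - c a a) = ∑ j ∈ s, x j * c j a := by
      have h0 : x a - x a * c a a = ∑ j ∈ s, x j * c j a := by
        nth_rewrite 1 [hxa]; abel
      rw [mul_sub, mul_one]; exact h0
    obtain ⟨u, hu⟩ := jacAux_isUnit (hc a a)
    have huv : (1 - c a a) * ↑u⁻¹ = 1 := by rw [← hu]; exact u.mul_inv
    have hxa' : x a = (∑ j ∈ s, x j * c j a) * ↑u⁻¹ := by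
      calc x a = x a * ((1 - c a a) * ↑u⁻¹) := by rw [huv, mul_one]
      _ = (x a * (1 - c a a)) * ↑u⁻¹ := by rw [mul_assoc]
      _ = (∑ j ∈ s, x j * c j a) * ↑u⁻¹ := by rw [hXa]
    set c' : ι → ι → R := fun j i => c j i + c j a * (↑u⁻¹ * c a i) with hc'def
    have hc' : ∀ j i, c' j i ∈ Ideal.jacobson (⊥ : Ideal R) := by
      intro j i
      exact add_mem (hc j i) (jacAux_mul_right (hc j a) _)
    have hx' : ∀ i ∈ s, x i = ∑ j ∈ s, x j * c' j i := by
      intro i hi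
      have := hx i (Finset.mem_insert_of_mem hi)
      rw [Finset.sum_insert ha] at this
      rw [this, hxa', Finset.sum_mul, Finset.sum_mul]
      rw [← Finset.sum_add_distrib]
      apply Finset.sum_congr rfl
      intro j _
      rw [hc'def]
      noncomm_ring
    have hzero := ih c' hc' x hx'
    have hxa0 : x a = 0 := by
      rw [hxa']
      rw [Finset.sum_congr rfl (fun j hj => by rw [hzero j hj, zero_mul])]
      rw [Finset.sum_const_zero, zero_mul]
    intro i hi
    rcases Finset.mem_insert.mp hi with h | h
    · rw [h]; exact hxa0
    · exact hzero i h

variable {P : Type w} [AddCommGroup P] [Module R P]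

lemma jacAux_coord (s : P →ₗ[R] P →₀ R) {x : P}
    (hx : x ∈ (Ideal.jacobson (⊥ : Ideal R)) • (⊤ : Submodule R P)) (j : P) :
    s x j ∈ Ideal.jacobson (⊥ : Ideal R) := by
  refine Submodule.smul_induction_on hx (fun r hr n _ => ?_) (fun y z hy hz => ?_)
  · rw [map_smul, Finsupp.smul_apply, smul_eq_mul]
    exact jacAux_mul_right hr _
  · rw [map_add, Finsupp.add_apply]
    exact add_mem hy hz

lemma jacAux_repr (s : P →ₗ[R] P →₀ R)
    (hs : Function.LeftInverse (Finsupp.linearCombination R id) s) (x : P) :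
    x = ∑ j ∈ (s x).support, (s x) j • j := by
  conv_lhs => rw [← hs x]
  rw [Finsupp.linearCombination_apply, Finsupp.sum]
  simp only [id_eq]

/-- Bass' lemma: a projective module equal to its radical multiple is trivial. -/
lemma jacAux_bass [Module.Projective R P]
    (h : (Ideal.jacobson (⊥ : Ideal R)) • (⊤ : Submodule R P) = ⊤) (x : P) : x = 0 := by
  classical
  obtain ⟨s, hs⟩ := Module.projective_def.mp ‹Module.Projective R P›
  have hcoord : ∀ (y : P) (j : P), s y j ∈ Ideal.jacobson (⊥ : Ideal R) :=
    fun y j => jacAux_coord s (by rw [h]; exact Submodule.mem_top) j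
  set t := (s x).support with ht
  have hrel : ∀ i ∈ t, s x i = ∑ j ∈ t, (s x) j * (s j i) := by
    intro i _
    have hx : s x = ∑ j ∈ t, (s x) j • s j := by
      conv_lhs => rw [jacAux_repr s hs x, map_sum]
      exact Finset.sum_congr rfl fun j _ => by rw [map_smul]
    calc s x i = (∑ j ∈ t, (s x) j • s j) i := by rw [← hx]
    _ = ∑ j ∈ t, ((s x) j • s j) i := by rw [Finsupp.finset_sum_apply]
    _ = ∑ j ∈ t, (s x) j * (s j i) := by
        exact Finset.sum_congr rfl fun j _ => by rw [Finsupp.smul_apply, smul_eq_mul]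
  have hzero := jacAux_system t (fun j i => s j i) (fun j i => hcoord j i) (fun i => s x i) hrel
  have hsx : s x = 0 := by
    ext i
    by_cases hi : i ∈ t
    · exact hzero i hi
    · rw [ht] at hi; exact Finsupp.notMem_support_iff.mp hi
  calc x = Finsupp.linearCombination R _root_.id (s x) := (hs x).symm
  _ = 0 := by rw [hsx, map_zero]

/-- A small submodule of a projective module lies in the radical multiple. -/
lemma jacAux_small_le [Module.Projective R P] (K : Submodule R P)
    (hK : ∀ X : Submodule R P, K ⊔ X = ⊤ → X = ⊤) :
    K ≤ (Ideal.jacobson (⊥ : Ideal R)) • (⊤ : Submodule R P) := by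
  classical
  obtain ⟨s, hs⟩ := Module.projective_def.mp ‹Module.Projective R P›
  intro k hk
  by_contra hnot
  have hex : ∃ j₀, s k j₀ ∉ Ideal.jacobson (⊥ : Ideal R) := by
    by_contra hall
    push_neg at hall
    apply hnot
    rw [jacAux_repr s hs k]
    exact Submodule.sum_mem _ fun j _ =>
      Submodule.smul_mem_smul (hall j) Submodule.mem_top
  obtain ⟨j₀, ha⟩ := hex
  set a := s k j₀ with hadef
  have hm : ∃ m : Ideal R, ((⊥ : Ideal R) ≤ m ∧ m.IsMaximal) ∧ a ∉ m := by
    by_contra h'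
    push_neg at h'
    exact ha (Submodule.mem_sInf.mpr fun m hm => h' m hm)
  obtain ⟨m, ⟨-, hmax⟩, ham⟩ := hm
  set lam : P →ₗ[R] R := (Finsupp.lapply j₀).comp s with hlam
  have hlamk : lam k = a := rfl
  set N := Submodule.comap lam m with hN
  have hma : m ⊔ Ideal.span {a} = ⊤ :=
    hmax.out.2 _ (lt_of_le_of_ne le_sup_left (fun hEq => ham
      (by rw [hEq]; exact Submodule.mem_sup_right (Ideal.subset_span rfl))))
  have hsup : K ⊔ N = ⊤ := by
    rw [eq_top_iff]
    intro p _
    have hp : lam p ∈ m ⊔ Ideal.span {a} := hma ▸ Submodule.mem_top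
    obtain ⟨m₁, hm₁, y, hy, hmy⟩ := Submodule.mem_sup.mp hp
    obtain ⟨r, hr⟩ := Submodule.mem_span_singleton.mp hy
    have hNmem : p - r • k ∈ N := by
      show lam (p - r • k) ∈ m
      have h1 : lam (p - r • k) = lam p - r * a := by
        rw [map_sub, map_smul, hlamk, smul_eq_mul]
      have h2 : lam p - r * a = m₁ := by
        rw [← hmy, ← hr, smul_eq_mul]; abel
      rw [h1, h2]; exact hm₁
    have : p = r • k + (p - r • k) := by abel
    rw [this]
    exact Submodule.add_mem_sup (K.smul_mem r hk) hNmem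
  have hNtop := hK N hsup
  exact ham (hlamk ▸ (hNtop ▸ Submodule.mem_top : k ∈ N))

lemma jacAux_proj_of_isCompl [Module.Projective R P] {p q : Submodule R P}
    (h : IsCompl p q) : Module.Projective R p :=
  Module.Projective.of_split p.subtype (Submodule.projectionOnto p q h)
    (by ext x; simp)

variable {M : Type v} [AddCommGroup M] [Module R M]

/-- Transfer: a small submodule of a projective submodule is inside `J • V`. -/
lemma jacAux_small_le_sub (V K : Submodule R M)
    (hproj : Module.Projective R V) (hKV : K ≤ V)
    (hsmall : SmallIn R V K) :
    K ≤ (Ideal.jacobson (⊥ : Ideal R)) • V := by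
  haveI := hproj
  set K' : Submodule R V := K.comap V.subtype with hK'
  have h1 : K'.map V.subtype = K := by
    rw [hK', Submodule.map_comap_subtype]
    exact inf_eq_right.mpr hKV
  have hsmall' : ∀ X : Submodule R V, K' ⊔ X = ⊤ → X = ⊤ := by
    intro X hX
    have hmap : K ⊔ X.map V.subtype = V := by
      rw [← h1, ← Submodule.map_sup, hX, Submodule.map_top, Submodule.range_subtype]
    have hXle : X.map V.subtype ≤ V := Submodule.map_subtype_le V X
    have heq := hsmall (X.map V.subtype) hXle hmap
    have : X.map V.subtype = Submodule.map V.subtype ⊤ := by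
      rw [heq, Submodule.map_top, Submodule.range_subtype]
    exact Submodule.map_injective_of_injective V.injective_subtype this
  have hle := jacAux_small_le K' hsmall'
  calc K = K'.map V.subtype := h1.symm
  _ ≤ (Submodule.map V.subtype ((Ideal.jacobson (⊥ : Ideal R)) • (⊤ : Submodule R V))) :=
      Submodule.map_mono hle
  _ = (Ideal.jacobson (⊥ : Ideal R)) • V := by
      rw [Submodule.map_smul'', Submodule.map_top, Submodule.range_subtype]

/-- Bass' lemma for submodules. -/
lemma jacAux_bass_sub (S : Submodule R M) (hproj : Module.Projective R S)
    (h : S ≤ (Ideal.jacobson (⊥ : Ideal R)) • S) : S = ⊥ := by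
  haveI := hproj
  have htop : ((Ideal.jacobson (⊥ : Ideal R)) • (⊤ : Submodule R S)) = ⊤ := by
    rw [eq_top_iff]
    have hmap : Submodule.map S.subtype (⊤ : Submodule R S) ≤
        Submodule.map S.subtype ((Ideal.jacobson (⊥ : Ideal R)) • (⊤ : Submodule R S)) := by
      rw [Submodule.map_smul'', Submodule.map_top, Submodule.range_subtype]
      exact h
    exact (Submodule.map_le_map_iff_of_injective S.injective_subtype _ _).mp hmap
  rw [eq_bot_iff]
  intro x hx
  have := jacAux_bass htop (⟨x, hx⟩ : S)
  rw [Submodule.mem_bot]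
  exact congrArg Subtype.val this

/-- π-projectivity: a projective module splits any sum of two submodules via endomorphisms. -/
lemma jacAux_pi_split [Module.Projective R M] {U V : Submodule R M} (h : U ⊔ V = ⊤) :
    ∃ f g : M →ₗ[R] M, (∀ m, f m + g m = m) ∧
      LinearMap.range f ≤ U ∧ LinearMap.range g ≤ V := by
  set φ : (U × V) →ₗ[R] M :=
    U.subtype.comp (LinearMap.fst R U V) + V.subtype.comp (LinearMap.snd R U V) with hφ
  have hsurj : Function.Surjective φ := by
    intro m
    have hmem : m ∈ U ⊔ V := h ▸ Submodule.mem_top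
    obtain ⟨u, hu, v, hv, huv⟩ := Submodule.mem_sup.mp hmem
    exact ⟨(⟨u, hu⟩, ⟨v, hv⟩), by simp [hφ, huv]⟩
  obtain ⟨l, hl⟩ := Module.projective_lifting_property φ LinearMap.id hsurj
  refine ⟨U.subtype.comp ((LinearMap.fst R U V).comp l),
    V.subtype.comp ((LinearMap.snd R U V).comp l), ?_, ?_, ?_⟩
  · intro m
    have := congrArg (fun (ψ : M →ₗ[R] M) => ψ m) hl
    simpa [hφ] using this
  · rintro x ⟨m, rfl⟩
    exact SetLike.coe_mem _
  · rintro x ⟨m, rfl⟩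
    exact SetLike.coe_mem _

/-- The image of a supplement under a suitable endomorphism is again a supplement. -/
lemma jacAux_suppl_image {A B' : Submodule R M}
    (f g : M →ₗ[R] M) (hfg : ∀ m, f m + g m = m) (hf : LinearMap.range f ≤ A)
    (hsup : A ⊔ B' = ⊤) (hsm : SmallIn R B' (A ⊓ B')) :
    A ⊔ Submodule.map g B' = ⊤ ∧ SmallIn R (Submodule.map g B') (A ⊓ Submodule.map g B') := by
  have hkey : ∀ b' ∈ B', b' ∈ A ⊔ Submodule.map g B' := by
    intro b' hb'
    have hdec : b' = f b' + g b' := (hfg b').symm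
    rw [hdec]
    exact Submodule.add_mem_sup (hf ⟨b', rfl⟩) (Submodule.mem_map_of_mem hb')
  constructor
  · rw [eq_top_iff]
    intro p _
    have hp : p ∈ A ⊔ B' := hsup ▸ Submodule.mem_top
    obtain ⟨a, ha, b, hb, rfl⟩ := Submodule.mem_sup.mp hp
    exact Submodule.add_mem _ (Submodule.mem_sup_left ha) (hkey b hb)
  · intro Z hZ hZeq
    have hclaim : (A ⊓ B') ⊔ (B' ⊓ Submodule.comap g Z) = B' := by
      apply le_antisymm (sup_le inf_le_right inf_le_left)
      intro b' hb'
      have hgb : g b' ∈ (A ⊓ Submodule.map g B') ⊔ Z := by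
        rw [hZeq]; exact Submodule.mem_map_of_mem hb'
      obtain ⟨a, ha, z, hz, haz⟩ := Submodule.mem_sup.mp hgb
      obtain ⟨b'', hb'', hgb''⟩ := Submodule.mem_map.mp (hZ hz)
      have h1 : g (b' - b'') = a := by
        rw [map_sub, hgb'', ← haz]; abel
      have h2 : b' - b'' ∈ A := by
        have hdec : b' - b'' = f (b' - b'') + g (b' - b'') := (hfg _).symm
        rw [hdec, h1]
        exact Submodule.add_mem _ (hf ⟨b' - b'', rfl⟩) ha.1
      have h3 : b' - b'' ∈ A ⊓ B' := ⟨h2, B'.sub_mem hb' hb''⟩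
      have h4 : b'' ∈ B' ⊓ Submodule.comap g Z := ⟨hb'', by
        show g b'' ∈ Z; rw [hgb'']; exact hz⟩
      have hdec : b' = (b' - b'') + b'' := by abel
      rw [hdec]
      exact Submodule.add_mem_sup h3 h4
    have hBC := hsm _ inf_le_left hclaim
    have hle : Submodule.map g B' ≤ Z := by
      rw [Submodule.map_le_iff_le_comap]
      conv_lhs => rw [← hBC]
      exact inf_le_right
    exact le_antisymm hZ hle

/-- In a projective module, mutual supplements intersect trivially. -/
lemma jacAux_ker_eq [Module.Projective R M] {U V : Submodule R M}
    (f g : M →ₗ[R] M) (hfg : ∀ m, f m + g m = m)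
    (hfU : LinearMap.range f ≤ U) (hgV : LinearMap.range g ≤ V)
    (hU : SmallIn R U (U ⊓ V)) (hV : SmallIn R V (U ⊓ V)) :
    LinearMap.ker g = U := by
  have hfV : ∀ v ∈ V, f v ∈ U ⊓ V := by
    intro v hv
    refine ⟨hfU ⟨v, rfl⟩, ?_⟩
    have : f v = v - g v := by rw [eq_sub_iff_add_eq]; exact hfg v
    rw [this]
    exact V.sub_mem hv (hgV ⟨v, rfl⟩)
  -- g(V) = V
  have hgVle : Submodule.map g V ≤ V := fun x hx => by
    obtain ⟨v, _, rfl⟩ := hx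
    exact hgV ⟨v, rfl⟩
  have hgVV : Submodule.map g V = V := by
    have hsum : (U ⊓ V) ⊔ Submodule.map g V = V := by
      apply le_antisymm (sup_le inf_le_right hgVle)
      intro v hv
      have hdec : v = f v + g v := (hfg v).symm
      rw [hdec]
      exact Submodule.add_mem_sup (hfV v hv) (Submodule.mem_map_of_mem hv)
    exact hV _ hgVle hsum
  -- ker g ⊔ V = ⊤
  have hker : LinearMap.ker g ⊔ V = ⊤ := by
    rw [eq_top_iff]
    intro m _
    have : g m ∈ Submodule.map g V := by rw [hgVV]; exact hgV ⟨m, rfl⟩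
    obtain ⟨v, hv, hgv⟩ := this
    have hmk : m - v ∈ LinearMap.ker g := by
      rw [LinearMap.mem_ker, map_sub, hgv, sub_self]
    have hdec : m = (m - v) + v := by abel
    rw [hdec]
    exact Submodule.add_mem_sup hmk hv
  -- ker g ≤ U
  have hkerU : LinearMap.ker g ≤ U := by
    intro m hm
    have : f m = m := by
      have := hfg m
      rw [LinearMap.mem_ker.mp hm, add_zero] at this
      exact this
    exact this ▸ hfU ⟨m, rfl⟩
  -- modular law
  have hmod : LinearMap.ker g ⊔ (V ⊓ U) = U := by
    rw [← sup_inf_assoc_of_le V hkerU, hker, top_inf_eq]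
  apply hU _ hkerU
  rw [sup_comm, ← inf_comm]
  exact hmod

lemma jacAux_mutual [Module.Projective R M] {U V : Submodule R M}
    (hsup : U ⊔ V = ⊤) (hU : SmallIn R U (U ⊓ V)) (hV : SmallIn R V (U ⊓ V)) :
    U ⊓ V = ⊥ := by
  obtain ⟨f, g, hfg, hfU, hgV⟩ := jacAux_pi_split hsup
  have h1 : LinearMap.ker g = U := jacAux_ker_eq f g hfg hfU hgV hU hV
  have hV' : SmallIn R V (V ⊓ U) := by rw [inf_comm]; exact hV
  have hU' : SmallIn R U (V ⊓ U) := by rw [inf_comm]; exact hU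
  have h2 : LinearMap.ker f = V :=
    jacAux_ker_eq g f (fun m => by rw [add_comm]; exact hfg m) hgV hfU hV' hU'
  rw [eq_bot_iff]
  intro k hk
  have hgk : g k = 0 := LinearMap.mem_ker.mp (h1 ▸ hk.1)
  have hfk : f k = 0 := LinearMap.mem_ker.mp (h2 ▸ hk.2)
  have := hfg k
  rw [hgk, hfk, add_zero] at this
  rw [Submodule.mem_bot]
  exact this.symm

end Aux14

theorem stmt14 {R : Type u} [Ring R] {M : Type v} [AddCommGroup M] [Module R M]
    [Module.Projective R M] :
    ISupplemented R (Ideal.jacobson (⊥ : Ideal R)) M ↔ Supplemented R M := by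
  constructor
  · -- J-supplemented → supplemented
    intro h X
    obtain ⟨Y, hYproj, hXY, hJ, hDM⟩ := h X
    refine ⟨Y, hXY, ?_⟩
    intro Z hZY hZeq
    obtain ⟨S, hSle, ⟨S', hSS', hSS'bot⟩, hSZ⟩ := hDM Z hZY hZeq
    have hSY : S ≤ Y := hSle.trans inf_le_right
    have hS'Y : S' ≤ Y := by rw [← hSS']; exact le_sup_right
    -- S ≤ J • S
    have h1 : S ≤ (Ideal.jacobson (⊥ : Ideal R)) • S := by
      have h2 : S ≤ (Ideal.jacobson (⊥ : Ideal R)) • Y := hSle.trans hJ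
      have h3 : (Ideal.jacobson (⊥ : Ideal R)) • Y =
          (Ideal.jacobson (⊥ : Ideal R)) • S ⊔ (Ideal.jacobson (⊥ : Ideal R)) • S' := by
        rw [← Submodule.smul_sup, hSS']
      have h4 : S = ((Ideal.jacobson (⊥ : Ideal R)) • S ⊔
          (Ideal.jacobson (⊥ : Ideal R)) • S') ⊓ S :=
        (inf_eq_right.mpr (h3 ▸ h2)).symm
      have h5 := sup_inf_assoc_of_le ((Ideal.jacobson (⊥ : Ideal R)) • S')
        (Submodule.smul_le_right : (Ideal.jacobson (⊥ : Ideal R)) • S ≤ S)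
      calc S = ((Ideal.jacobson (⊥ : Ideal R)) • S ⊔
            (Ideal.jacobson (⊥ : Ideal R)) • S') ⊓ S := h4
      _ = (Ideal.jacobson (⊥ : Ideal R)) • S ⊔
            ((Ideal.jacobson (⊥ : Ideal R)) • S' ⊓ S) := h5
      _ ≤ (Ideal.jacobson (⊥ : Ideal R)) • S ⊔ (S' ⊓ S) :=
            sup_le_sup_left (inf_le_inf_right S Submodule.smul_le_right) _
      _ = (Ideal.jacobson (⊥ : Ideal R)) • S := by
            rw [inf_comm, hSS'bot, sup_bot_eq]
    -- S is projective
    haveI := hYproj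
    set S₁ := S.comap Y.subtype with hS₁
    set S₁' := S'.comap Y.subtype with hS₁'
    have hmap₁ : S₁.map Y.subtype = S := by
      rw [hS₁, Submodule.map_comap_subtype]; exact inf_eq_right.mpr hSY
    have hmap₂ : S₁'.map Y.subtype = S' := by
      rw [hS₁', Submodule.map_comap_subtype]; exact inf_eq_right.mpr hS'Y
    have hcompl : IsCompl S₁ S₁' := by
      constructor
      · rw [disjoint_iff]
        rw [hS₁, hS₁', ← Submodule.comap_inf, hSS'bot, Submodule.comap_bot,
          Submodule.ker_subtype]
      · rw [codisjoint_iff]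
        apply Submodule.map_injective_of_injective Y.injective_subtype
        rw [Submodule.map_sup, hmap₁, hmap₂, hSS', Submodule.map_top,
          Submodule.range_subtype]
    have hprojS₁ : Module.Projective R S₁ := jacAux_proj_of_isCompl hcompl
    have hprojS : Module.Projective R S :=
      Module.Projective.of_equiv (Submodule.comapSubtypeEquivOfLe hSY)
    have hSbot : S = ⊥ := jacAux_bass_sub S hprojS h1
    rw [hSbot, bot_sup_eq] at hSZ
    exact hSZ
  · -- supplemented → J-supplemented
    intro hsupp X
    obtain ⟨V₀, hXV₀, hsmV₀⟩ := hsupp X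
    obtain ⟨f, g, hfg, hfV₀, hgX⟩ := jacAux_pi_split (show V₀ ⊔ X = ⊤ by rwa [sup_comm])
    obtain ⟨B', hV₀B', hsmB'⟩ := hsupp V₀
    obtain ⟨hsupU, hsmU⟩ := jacAux_suppl_image f g hfg hfV₀ hV₀B' hsmB'
    set U := Submodule.map g B' with hUdef
    have hUX : U ≤ X := by
      intro x hx
      obtain ⟨b, _, rfl⟩ := hx
      exact hgX ⟨b, rfl⟩
    have hsupUV : U ⊔ V₀ = ⊤ := by rwa [sup_comm] at hsupU
    have hsmallU : SmallIn R U (U ⊓ V₀) := by rw [inf_comm]; exact hsmU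
    have hsmallV : SmallIn R V₀ (U ⊓ V₀) := by
      intro Z hZ hZeq
      apply hsmV₀ Z hZ
      apply le_antisymm (sup_le inf_le_right hZ)
      calc V₀ = (U ⊓ V₀) ⊔ Z := hZeq.symm
      _ ≤ (X ⊓ V₀) ⊔ Z := sup_le_sup_right (inf_le_inf_right V₀ hUX) Z
    have hcompl0 : U ⊓ V₀ = ⊥ := jacAux_mutual hsupUV hsmallU hsmallV
    have hprojV₀ : Module.Projective R V₀ := by
      apply jacAux_proj_of_isCompl (q := U)
      constructor
      · rw [disjoint_iff, inf_comm]; exact hcompl0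
      · rw [codisjoint_iff, sup_comm]; exact hsupUV
    have hJle : X ⊓ V₀ ≤ (Ideal.jacobson (⊥ : Ideal R)) • V₀ :=
      jacAux_small_le_sub V₀ (X ⊓ V₀) hprojV₀ inf_le_right hsmV₀
    refine ⟨V₀, hprojV₀, hXV₀, hJle, ?_⟩
    intro Z hZ hZeq
    exact ⟨⊥, bot_le, ⟨V₀, by rw [bot_sup_eq], by rw [bot_inf_eq]⟩,
      by rw [bot_sup_eq]; exact hsmV₀ Z hZ hZeq⟩
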